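/- Let ψ : 𝔫⁺ → ℂ be a Lie algebra homomorphism with ψ(L_1) ≠ 0, ψ(L_2) ≠ 0, ψ(I_1) ≠ 0. For every integer m ≥ 1, every pseudopartition λ and every partition μ, one has maxdeg([I_m, L_{−λ}I_{−μ}]w) ≤ |λ| + |μ| − m + 1 in M_ψ. -/

import Mathlib

set_option linter.unusedSectionVars false

/-!
Common setup: the twisted Heisenberg–Virasoro algebra `𝒱`, its subalgebra `𝔫⁺`,
the universal Whittaker module `M_ψ`, the quotients `L_{ψ,ξ}`, and the notions of
Whittaker vectors/modules, degrees, etc.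
-/

open UniversalEnvelopingAlgebra

attribute [local instance 100] LieRing.ofAssociativeRing

/-- The twisted Heisenberg–Virasoro algebra: a complex Lie algebra with basis
`{L k, I k (k : ℤ), z 0, z 1, z 2}` (here `z 0, z 1, z 2` are the paper's `z₁, z₂, z₃`)
and the prescribed brackets. -/
class THV (V : Type) [LieRing V] [LieAlgebra ℂ V] : Type where
  L : ℤ → V
  I : ℤ → V
  z : Fin 3 → V
  basis : Module.Basis (ℤ ⊕ ℤ ⊕ Fin 3) ℂ V
  basis_L : ∀ k : ℤ, basis (Sum.inl k) = L k
  basis_I : ∀ k : ℤ, basis (Sum.inr (Sum.inl k)) = I k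
  basis_z : ∀ i : Fin 3, basis (Sum.inr (Sum.inr i)) = z i
  lie_LL : ∀ k j : ℤ, ⁅L k, L j⁆ =
    ((j : ℂ) - (k : ℂ)) • L (k + j) +
      (if j = -k then ((k : ℂ) ^ 3 - (k : ℂ)) / 12 else 0) • z 0
  lie_LI : ∀ k j : ℤ, ⁅L k, I j⁆ =
    (j : ℂ) • I (k + j) + (if j = -k then (k : ℂ) ^ 2 - (k : ℂ) else 0) • z 1
  lie_II : ∀ k j : ℤ, ⁅I k, I j⁆ = (if j = -k then (k : ℂ) else 0) • z 2
  lie_z : ∀ i : Fin 3, ∀ x : V, ⁅z i, x⁆ = 0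

namespace THV

variable (V : Type) [LieRing V] [LieAlgebra ℂ V] [THV V]

/-- `𝔫⁺ = span {L k, I k : k ≥ 1}` (a Lie subalgebra of `𝒱`). -/
def nPlus : LieSubalgebra ℂ V :=
  LieSubalgebra.lieSpan ℂ V {x | ∃ k : ℤ, 1 ≤ k ∧ (x = L k ∨ x = I k)}

theorem L_mem_nPlus {k : ℤ} (h : 1 ≤ k) : (L k : V) ∈ nPlus V :=
  LieSubalgebra.subset_lieSpan ⟨k, h, Or.inl rfl⟩

theorem I_mem_nPlus {k : ℤ} (h : 1 ≤ k) : (I k : V) ∈ nPlus V :=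
  LieSubalgebra.subset_lieSpan ⟨k, h, Or.inr rfl⟩

/-- A Whittaker vector of type `ψ` in a `𝒱`-module `W`. -/
def IsWhittakerVector (ψ : nPlus V →ₗ⁅ℂ⁆ ℂ) {W : Type} [AddCommGroup W] [Module ℂ W]
    [LieRingModule V W] (w : W) : Prop :=
  ∀ x : nPlus V, ⁅(x : V), w⁆ = ψ x • w

/-- The universal enveloping algebra `U(𝒱)`. -/
abbrev UEA := UniversalEnvelopingAlgebra ℂ V

/-- The canonical embedding `𝒱 → U(𝒱)`. -/
noncomputable def ιV : V →ₗ⁅ℂ⁆ UEA V := UniversalEnvelopingAlgebra.ι ℂ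

/-- The four central elements `z₀ = I₀, z₁, z₂, z₃` of `U(𝒱)`. -/
noncomputable def zElt : Fin 4 → UEA V
  | 0 => ιV V (I 0)
  | 1 => ιV V (z 0)
  | 2 => ιV V (z 1)
  | 3 => ιV V (z 2)

/-- The left ideal of `U(𝒱)` generated by `{x - ψ(x) : x ∈ 𝔫⁺}`;
`M_ψ = U(𝒱) ⊗_{U(𝔫⁺)} ℂ_ψ` is canonically the quotient by this left ideal. -/
noncomputable def whittakerIdeal (ψ : nPlus V →ₗ⁅ℂ⁆ ℂ) : Submodule (UEA V) (UEA V) :=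
  Submodule.span (UEA V)
    {u | ∃ x : nPlus V, u = ιV V (x : V) - algebraMap ℂ (UEA V) (ψ x)}

/-- The universal Whittaker module `M_ψ`. -/
abbrev Mpsi (ψ : nPlus V →ₗ⁅ℂ⁆ ℂ) := (UEA V) ⧸ whittakerIdeal V ψ

/-- Any quotient of `U(𝒱)` (as a left module over itself) is a `𝒱`-module. -/
noncomputable instance (p : Submodule (UEA V) (UEA V)) : LieRingModule V ((UEA V) ⧸ p) :=
  letI : LieRingModule (UEA V) ((UEA V) ⧸ p) := LieRingModule.ofAssociativeModule
  LieRingModule.compLieHom _ (ιV V)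

noncomputable instance (p : Submodule (UEA V) (UEA V)) : LieModule ℂ V ((UEA V) ⧸ p) :=
  letI : LieRingModule (UEA V) ((UEA V) ⧸ p) := LieRingModule.ofAssociativeModule
  letI : LieModule ℂ (UEA V) ((UEA V) ⧸ p) := LieModule.ofAssociativeModule
  LieModule.compLieHom _ (ιV V)

/-- The cyclic Whittaker vector `w = 1 ⊗ 1` of `M_ψ`. -/
noncomputable def mw (ψ : nPlus V →ₗ⁅ℂ⁆ ℂ) : Mpsi V ψ :=
  Submodule.Quotient.mk 1

/-- The submodule `Σ_{i} (z_i − ξ_i·1) M_ψ` of `M_ψ`. -/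
noncomputable def centralSub (ψ : nPlus V →ₗ⁅ℂ⁆ ℂ) (ξ : Fin 4 → ℂ) :
    Submodule (UEA V) (Mpsi V ψ) :=
  Submodule.span (UEA V)
    {m | ∃ i : Fin 4, ∃ y : Mpsi V ψ, m = (zElt V i - algebraMap ℂ (UEA V) (ξ i)) • y}

/-- The Whittaker module `L_{ψ,ξ} = M_ψ / Σᵢ (z_i − ξ_i·1) M_ψ`. -/
abbrev Lpsixi (ψ : nPlus V →ₗ⁅ℂ⁆ ℂ) (ξ : Fin 4 → ℂ) :=
  Mpsi V ψ ⧸ centralSub V ψ ξ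

noncomputable instance (ψ : nPlus V →ₗ⁅ℂ⁆ ℂ) (q : Submodule (UEA V) (Mpsi V ψ)) :
    LieRingModule V ((Mpsi V ψ) ⧸ q) :=
  letI : LieRingModule (UEA V) ((Mpsi V ψ) ⧸ q) := LieRingModule.ofAssociativeModule
  LieRingModule.compLieHom _ (ιV V)

noncomputable instance (ψ : nPlus V →ₗ⁅ℂ⁆ ℂ) (q : Submodule (UEA V) (Mpsi V ψ)) :
    LieModule ℂ V ((Mpsi V ψ) ⧸ q) :=
  letI : LieRingModule (UEA V) ((Mpsi V ψ) ⧸ q) := LieRingModule.ofAssociativeModule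
  letI : LieModule ℂ (UEA V) ((Mpsi V ψ) ⧸ q) := LieModule.ofAssociativeModule
  LieModule.compLieHom _ (ιV V)

/-- The image `w̄` of the cyclic Whittaker vector in `L_{ψ,ξ}`. -/
noncomputable def lw (ψ : nPlus V →ₗ⁅ℂ⁆ ℂ) (ξ : Fin 4 → ℂ) : Lpsixi V ψ ξ :=
  Submodule.Quotient.mk (mw V ψ)

/-- The size `|λ|` of a pseudopartition recorded as its multiplicity function. -/
def pdeg (f : ℕ →₀ ℕ) : ℕ := f.sum fun k m => k * m

/-- `L_{-λ} = L_{-λ_s} ⋯ L_{-λ_1} = ⋯ L_{-1}^{λ(1)} L_0^{λ(0)} ∈ U(𝒱)`,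
for a pseudopartition `λ` given by its multiplicity function. -/
noncomputable def Lword (lam : ℕ →₀ ℕ) : UEA V :=
  (((List.range (lam.support.sup id + 1)).reverse).map
    fun k : ℕ => (ιV V (L (-(k : ℤ)))) ^ (lam k)).prod

/-- `I_{-μ} = I_{-μ_r} ⋯ I_{-μ_1} = ⋯ I_{-2}^{μ(2)} I_{-1}^{μ(1)} ∈ U(𝒱)`. -/
noncomputable def Iword (mu : ℕ →₀ ℕ) : UEA V :=
  (((List.range (mu.support.sup id + 1)).reverse).map
    fun k : ℕ => (ιV V (I (-(k : ℤ)))) ^ (mu k)).prod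

/-- `z^t = z₀^{t₀} z₁^{t₁} z₂^{t₂} z₃^{t₃} ∈ U(𝒱)`. -/
noncomputable def zword (t : Fin 4 → ℕ) : UEA V :=
  ((List.finRange 4).map fun i => (zElt V i) ^ (t i)).prod

/-- Index type for the PBW-type basis of `M_ψ`: a 4-tuple `t`, a pseudopartition `λ`,
and a partition `μ` (a multiplicity function with `μ(0) = 0`). -/
abbrev WIdx : Type := (Fin 4 → ℕ) × (ℕ →₀ ℕ) × {g : ℕ →₀ ℕ // g 0 = 0}

/-- The property that `B` is the standard basis `{z^t L_{-λ} I_{-μ} w}` of `M_ψ`. -/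
def IsStdBasis (ψ : nPlus V →ₗ⁅ℂ⁆ ℂ) (B : Module.Basis WIdx ℂ (Mpsi V ψ)) : Prop :=
  ∀ (t : Fin 4 → ℕ) (lam : ℕ →₀ ℕ) (mu : {g : ℕ →₀ ℕ // g 0 = 0}),
    B (t, lam, mu) = (zword V t * Lword V lam * Iword V mu.1) • mw V ψ

/-- `maxdeg` of a vector of `M_ψ` with respect to the standard basis
(`⊥` plays the role of `-∞`). -/
noncomputable def maxdeg (ψ : nPlus V →ₗ⁅ℂ⁆ ℂ) (B : Module.Basis WIdx ℂ (Mpsi V ψ))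
    (v : Mpsi V ψ) : WithBot ℤ :=
  ((B.repr v).support.image fun p => ((pdeg p.2.1 : ℤ) + (pdeg p.2.2.1 : ℤ))).max

/-- `max_{L_0}` of a vector of `M_ψ`: the largest `λ(0)` over basis vectors occurring
with a nonzero coefficient. -/
noncomputable def maxL0 (ψ : nPlus V →ₗ⁅ℂ⁆ ℂ) (B : Module.Basis WIdx ℂ (Mpsi V ψ))
    (v : Mpsi V ψ) : WithBot ℤ :=
  ((B.repr v).support.image fun p => (p.2.1 0 : ℤ)).max

end THV

namespace THV

variable (V : Type) [LieRing V] [LieAlgebra ℂ V] [THV V]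

/-! ### Commutation infrastructure in `U(𝒱)` -/

lemma iota_mul (x y : V) : ιV V x * ιV V y = ιV V y * ιV V x + ιV V ⁅x, y⁆ := by
  rw [LieHom.map_lie]
  show _ = _ + ⁅ιV V x, ιV V y⁆
  rw [Ring.lie_def]; abel

lemma commute_iota (x y : V) (h : ⁅x, y⁆ = 0) : Commute (ιV V x) (ιV V y) := by
  have := iota_mul V x y
  rw [h, map_zero, add_zero] at this
  exact this

lemma lie_L_z (k : ℤ) (i : Fin 3) : ⁅(L k : V), (z i : V)⁆ = 0 := by
  rw [← lie_skew, lie_z]; simp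

lemma lie_I_z (k : ℤ) (i : Fin 3) : ⁅(I k : V), (z i : V)⁆ = 0 := by
  rw [← lie_skew, lie_z]; simp

lemma lie_L_I0 (k : ℤ) : ⁅(L k : V), (I 0 : V)⁆ = 0 := by
  rw [lie_LI]
  rcases eq_or_ne k 0 with h | h <;> simp [h]

lemma lie_I0_L (k : ℤ) : ⁅(I 0 : V), (L k : V)⁆ = 0 := by
  rw [← lie_skew, lie_L_I0]; simp

lemma lie_I0_I (k : ℤ) : ⁅(I 0 : V), (I k : V)⁆ = 0 := by
  rw [lie_II]; simp

lemma lie_I_I0 (k : ℤ) : ⁅(I k : V), (I 0 : V)⁆ = 0 := by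
  rw [← lie_skew, lie_I0_I]; simp

lemma commute_zElt_iotaL (i : Fin 4) (k : ℤ) : Commute (zElt V i) (ιV V (L k)) := by
  fin_cases i
  · exact commute_iota V _ _ (lie_I0_L V k)
  · exact commute_iota V _ _ (lie_z 0 (L k))
  · exact commute_iota V _ _ (lie_z 1 (L k))
  · exact commute_iota V _ _ (lie_z 2 (L k))

lemma commute_zElt_iotaI (i : Fin 4) (k : ℤ) : Commute (zElt V i) (ιV V (I k)) := by
  fin_cases i
  · exact commute_iota V _ _ (lie_I0_I V k)
  · exact commute_iota V _ _ (lie_z 0 (I k))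
  · exact commute_iota V _ _ (lie_z 1 (I k))
  · exact commute_iota V _ _ (lie_z 2 (I k))

lemma commute_zElt_zElt (i j : Fin 4) : Commute (zElt V i) (zElt V j) := by
  fin_cases j
  · exact (commute_zElt_iotaI V i 0)
  · fin_cases i
    · exact commute_iota V _ _ (lie_I_z V 0 0)
    all_goals exact commute_iota V _ _ (lie_z _ _)
  · fin_cases i
    · exact commute_iota V _ _ (lie_I_z V 0 1)
    all_goals exact commute_iota V _ _ (lie_z _ _)
  · fin_cases i
    · exact commute_iota V _ _ (lie_I_z V 0 2)
    all_goals exact commute_iota V _ _ (lie_z _ _)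

lemma commute_iotaL_zword (k : ℤ) (t : Fin 4 → ℕ) : Commute (ιV V (L k)) (zword V t) := by
  apply Commute.list_prod_right
  intro y hy
  simp only [List.mem_map] at hy
  obtain ⟨i, -, rfl⟩ := hy
  exact ((commute_zElt_iotaL V i k).symm).pow_right _

lemma commute_iotaI_zword (k : ℤ) (t : Fin 4 → ℕ) : Commute (ιV V (I k)) (zword V t) := by
  apply Commute.list_prod_right
  intro y hy
  simp only [List.mem_map] at hy
  obtain ⟨i, -, rfl⟩ := hy
  exact ((commute_zElt_iotaI V i k).symm).pow_right _

end THV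

namespace THV

section Words

variable (V : Type) [LieRing V] [LieAlgebra ℂ V] [THV V]

lemma commute_swapl {M : Type*} [Semigroup M] {a b : M} (h : Commute a b) (c : M) :
    a * (b * c) = b * (a * c) := by rw [← mul_assoc, h.eq, mul_assoc]

/-- Generic normal word. -/
noncomputable def word (f : ℕ → UEA V) (g : ℕ →₀ ℕ) : UEA V :=
  (((List.range (g.support.sup id + 1)).reverse).map fun k : ℕ => (f k) ^ (g k)).prod

lemma Lword_eq_word (lam : ℕ →₀ ℕ) :
    Lword V lam = word V (fun k => ιV V (L (-(k : ℤ)))) lam := rfl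

lemma Iword_eq_word (mu : ℕ →₀ ℕ) :
    Iword V mu = word V (fun k => ιV V (I (-(k : ℤ)))) mu := rfl

lemma word_ext (f : ℕ → UEA V) (g : ℕ →₀ ℕ) (M : ℕ) (h : g.support.sup id ≤ M) :
    (((List.range (M + 1)).reverse).map fun k : ℕ => (f k) ^ (g k)).prod = word V f g := by
  obtain ⟨j, rfl⟩ := Nat.exists_eq_add_of_le h
  induction j with
  | zero => rfl
  | succ j ih =>
    have hz : g (g.support.sup id + j + 1) = 0 := by
      by_contra hne
      have : g.support.sup id + j + 1 ≤ g.support.sup id :=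
        Finset.le_sup (f := id) (Finsupp.mem_support_iff.mpr hne)
      omega
    have : g.support.sup id + (j + 1) + 1 = (g.support.sup id + j + 1) + 1 := by omega
    rw [this, List.range_succ, List.reverse_append]
    simp only [List.reverse_singleton, List.singleton_append, List.map_cons, List.prod_cons,
      hz, pow_zero, one_mul]
    exact ih (by omega)

lemma sup_add_single {g : ℕ →₀ ℕ} {a : ℕ} (ha : g.support.sup id ≤ a) :
    (g + Finsupp.single a (1 : ℕ)).support.sup id = a := by
  apply le_antisymm
  · apply Finset.sup_le
    intro b hb
    rw [Finsupp.mem_support_iff, Finsupp.add_apply] at hb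
    rcases Nat.eq_zero_or_pos (g b) with h | h
    · have : Finsupp.single a (1 : ℕ) b ≠ 0 := by omega
      rw [Finsupp.single_apply_ne_zero] at this
      simp [this.1]
    · exact le_trans (Finset.le_sup (f := id) (Finsupp.mem_support_iff.mpr (by omega))) ha
  · apply Finset.le_sup (f := id)
    rw [Finsupp.mem_support_iff, Finsupp.add_apply, Finsupp.single_eq_same]
    omega

lemma word_insert (f : ℕ → UEA V) {g : ℕ →₀ ℕ} {a : ℕ} (ha : g.support.sup id ≤ a) :
    word V f (g + Finsupp.single a 1) = f a * word V f g := by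
  have hsup := sup_add_single (g := g) ha
  rw [word, hsup, List.range_succ, List.reverse_append]
  simp only [List.reverse_singleton, List.singleton_append, List.map_cons, List.prod_cons]
  have h1 : (g + Finsupp.single a (1 : ℕ)) a = g a + 1 := by
    rw [Finsupp.add_apply, Finsupp.single_eq_same]
  have h2 : ((List.range a).reverse.map fun k : ℕ => (f k) ^ ((g + Finsupp.single a (1:ℕ)) k))
      = (List.range a).reverse.map fun k : ℕ => (f k) ^ (g k) := by
    apply List.map_congr_left
    intro b hb
    rw [List.mem_reverse, List.mem_range] at hb
    rw [Finsupp.add_apply, Finsupp.single_apply, if_neg (by omega), add_zero]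
  rw [h1, h2, pow_succ', mul_assoc]
  congr 1
  have := word_ext V f g a ha
  rw [← this, List.range_succ, List.reverse_append]
  simp

lemma sup_sub_single_le (g : ℕ →₀ ℕ) (N : ℕ) (hN : g.support.sup id ≤ N) :
    (g - Finsupp.single N (1:ℕ)).support.sup id ≤ N := by
  apply Finset.sup_le
  intro b hb
  rw [Finsupp.mem_support_iff, Finsupp.tsub_apply] at hb
  have : g b ≠ 0 := by omega
  exact le_trans (Finset.le_sup (f := id) (Finsupp.mem_support_iff.mpr this)) hN

lemma sup_mem_support {g : ℕ →₀ ℕ} (hg : g ≠ 0) : g (g.support.sup id) ≠ 0 := by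
  obtain ⟨i, hi, he⟩ := Finset.exists_mem_eq_sup g.support
    (Finsupp.support_nonempty_iff.mpr hg) id
  rw [he]
  exact Finsupp.mem_support_iff.mp hi

lemma sub_add_single_cancel {g : ℕ →₀ ℕ} {N : ℕ} (hN : g N ≠ 0) :
    (g - Finsupp.single N 1) + Finsupp.single N 1 = g :=
  tsub_add_cancel_of_le (Finsupp.single_le_iff.mpr (by omega))

lemma word_peel (f : ℕ → UEA V) {g : ℕ →₀ ℕ} (hg : g ≠ 0) :
    word V f g = f (g.support.sup id) *
      word V f (g - Finsupp.single (g.support.sup id) 1) := by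
  have hN := sup_mem_support hg
  conv_lhs => rw [← sub_add_single_cancel hN]
  exact word_insert V f (sup_sub_single_le g _ le_rfl)

lemma Lword_zero : Lword V 0 = 1 := by simp [Lword]

lemma Iword_zero : Iword V 0 = 1 := by simp [Iword]

lemma zword_zero : zword V (fun _ => 0) = 1 := by simp [zword]

lemma commute_pow (i j : Fin 4) (n : ℕ) : Commute (zElt V i) (zElt V j ^ n) :=
  (commute_zElt_zElt V i j).pow_right n

lemma finRange_four : List.finRange 4 = [0, 1, 2, 3] := rfl

lemma zword_expand (t : Fin 4 → ℕ) :
    zword V t = zElt V 0 ^ t 0 * (zElt V 1 ^ t 1 * (zElt V 2 ^ t 2 * (zElt V 3 ^ t 3 * 1))) := by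
  rw [zword, finRange_four]
  simp only [List.map_cons, List.map_nil, List.prod_cons, List.prod_nil]

lemma zElt_mul_zword (i : Fin 4) (t : Fin 4 → ℕ) :
    ∃ t' : Fin 4 → ℕ, zElt V i * zword V t = zword V t' := by
  have h4 : ∀ j : Fin 4, j = 0 ∨ j = 1 ∨ j = 2 ∨ j = 3 := by decide
  rcases h4 i with rfl | rfl | rfl | rfl
  · refine ⟨fun j => if j = 0 then t 0 + 1 else t j, ?_⟩
    rw [zword_expand, zword_expand]
    simp only [if_true, if_pos rfl, if_neg (by decide : (1 : Fin 4) ≠ 0),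
      if_neg (by decide : (2 : Fin 4) ≠ 0), if_neg (by decide : (3 : Fin 4) ≠ 0)]
    rw [pow_succ', mul_assoc]
  · refine ⟨fun j => if j = 1 then t 1 + 1 else t j, ?_⟩
    rw [zword_expand, zword_expand]
    simp only [if_true, if_pos rfl, if_neg (by decide : (0 : Fin 4) ≠ 1),
      if_neg (by decide : (2 : Fin 4) ≠ 1), if_neg (by decide : (3 : Fin 4) ≠ 1)]
    rw [commute_swapl (commute_pow V 1 0 (t 0))]
    simp only [pow_succ', mul_assoc]
  · refine ⟨fun j => if j = 2 then t 2 + 1 else t j, ?_⟩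
    rw [zword_expand, zword_expand]
    simp only [if_true, if_pos rfl, if_neg (by decide : (0 : Fin 4) ≠ 2),
      if_neg (by decide : (1 : Fin 4) ≠ 2), if_neg (by decide : (3 : Fin 4) ≠ 2)]
    rw [commute_swapl (commute_pow V 2 0 (t 0)), commute_swapl (commute_pow V 2 1 (t 1))]
    simp only [pow_succ', mul_assoc]
  · refine ⟨fun j => if j = 3 then t 3 + 1 else t j, ?_⟩
    rw [zword_expand, zword_expand]
    simp only [if_true, if_pos rfl, if_neg (by decide : (0 : Fin 4) ≠ 3),
      if_neg (by decide : (1 : Fin 4) ≠ 3), if_neg (by decide : (2 : Fin 4) ≠ 3)]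
    rw [commute_swapl (commute_pow V 3 0 (t 0)), commute_swapl (commute_pow V 3 1 (t 1)),
      commute_swapl (commute_pow V 3 2 (t 2))]
    simp only [pow_succ', mul_assoc]

end Words

end THV

namespace THV

section ModuleSide

variable (V : Type) [LieRing V] [LieAlgebra ℂ V] [THV V] (ψ : nPlus V →ₗ⁅ℂ⁆ ℂ)

/-! ### `pdeg` and size lemmas -/

lemma pdeg_add (g h : ℕ →₀ ℕ) : pdeg (g + h) = pdeg g + pdeg h := by
  unfold pdeg
  rw [Finsupp.sum_add_index]
  · intro a _; exact (Nat.mul_zero a)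
  · intro a _ b c; exact Nat.mul_add a b c

lemma pdeg_single (a n : ℕ) : pdeg (Finsupp.single a n) = a * n := by
  unfold pdeg
  exact Finsupp.sum_single_index (Nat.mul_zero a)

/-- size of a pseudopartition: number of parts -/
def psize (g : ℕ →₀ ℕ) : ℕ := g.sum fun _ n => n

lemma psize_add (g h : ℕ →₀ ℕ) : psize (g + h) = psize g + psize h := by
  unfold psize
  rw [Finsupp.sum_add_index] <;> simp

lemma psize_single (a n : ℕ) : psize (Finsupp.single a n) = n := by
  unfold psize
  exact Finsupp.sum_single_index rfl

lemma psize_pos {g : ℕ →₀ ℕ} (hg : g ≠ 0) : 1 ≤ psize g := by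
  have h := sup_mem_support hg
  rcases Nat.eq_zero_or_pos (psize g) with h0 | h1
  · exfalso
    apply h
    unfold psize at h0
    rw [Finsupp.sum, Finset.sum_eq_zero_iff] at h0
    by_contra hne
    exact hne (h0 _ (Finsupp.mem_support_iff.mpr hne))
  · exact h1

/-! ### The basis-vector producing elements and degree filtration -/

/-- `z^t L_{-λ} I_{-μ} w ∈ M_ψ`. -/
noncomputable def Bv (t : Fin 4 → ℕ) (lam mu : ℕ →₀ ℕ) : Mpsi V ψ :=
  (zword V t * Lword V lam * Iword V mu) • mw V ψ

/-- The span of basis vectors of degree at most `k`. -/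
noncomputable def Dk (B : Module.Basis (WIdx) ℂ (Mpsi V ψ)) (k : ℤ) : Submodule ℂ (Mpsi V ψ) :=
  Submodule.span ℂ (B '' {p : WIdx | (pdeg p.2.1 : ℤ) + (pdeg p.2.2.1 : ℤ) ≤ k})

variable (B : Module.Basis (WIdx) ℂ (Mpsi V ψ))

lemma Dk_mono {k k' : ℤ} (h : k ≤ k') : Dk V ψ B k ≤ Dk V ψ B k' :=
  Submodule.span_mono (Set.image_mono fun p hp => le_trans hp h)

lemma Bv_mem_Dk (hB : IsStdBasis V ψ B) {t : Fin 4 → ℕ} {lam mu : ℕ →₀ ℕ}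
    (h0 : mu 0 = 0) {k : ℤ} (hk : (pdeg lam : ℤ) + (pdeg mu : ℤ) ≤ k) :
    Bv V ψ t lam mu ∈ Dk V ψ B k := by
  have : Bv V ψ t lam mu = B (t, lam, ⟨mu, h0⟩) := by
    rw [hB t lam ⟨mu, h0⟩]; rfl
  rw [this]
  exact Submodule.subset_span ⟨(t, lam, ⟨mu, h0⟩), hk, rfl⟩

lemma mem_Dk_maxdeg {v : Mpsi V ψ} {k : ℤ} (hv : v ∈ Dk V ψ B k) :
    maxdeg V ψ B v ≤ (k : WithBot ℤ) := by
  rw [Dk, Module.Basis.mem_span_image] at hv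
  apply Finset.max_le
  intro d hd
  simp only [Finset.mem_image] at hd
  obtain ⟨p, hp, rfl⟩ := hd
  exact_mod_cast hv hp

/-! ### Whittaker vector action -/

lemma iota_smul_mw (x : nPlus V) : ιV V (x : V) • mw V ψ = ψ x • mw V ψ := by
  unfold mw
  have h1 : ιV V (x : V) • (Submodule.Quotient.mk (1 : UEA V) : Mpsi V ψ)
      = Submodule.Quotient.mk (ιV V (x : V)) := by
    rw [← Submodule.Quotient.mk_smul]; simp [smul_eq_mul]
  have h2 : (algebraMap ℂ (UEA V) (ψ x)) • (Submodule.Quotient.mk (1 : UEA V) : Mpsi V ψ)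
      = Submodule.Quotient.mk (algebraMap ℂ (UEA V) (ψ x)) := by
    rw [← Submodule.Quotient.mk_smul]; simp [smul_eq_mul]
  have h3 : (Submodule.Quotient.mk (ιV V (x : V)) : Mpsi V ψ)
      = Submodule.Quotient.mk (algebraMap ℂ (UEA V) (ψ x)) := by
    rw [Submodule.Quotient.eq]
    exact Submodule.subset_span ⟨x, rfl⟩
  rw [h1, h3, ← h2, algebraMap_smul]

lemma psi_I_eq_zero {m : ℤ} (hm : 2 ≤ m) (h : (I m : V) ∈ nPlus V) :
    ψ ⟨I m, h⟩ = 0 := by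
  have hm1 : (1 : ℤ) ≤ m - 1 := by omega
  set x : nPlus V := ⟨L 1, L_mem_nPlus V le_rfl⟩
  set y : nPlus V := ⟨I (m - 1), I_mem_nPlus V hm1⟩
  have hbr : ⁅x, y⁆ = (((m : ℂ) - 1)) • (⟨I m, h⟩ : nPlus V) := by
    apply Subtype.ext
    show ⁅(L 1 : V), (I (m-1) : V)⁆ = ((m : ℂ) - 1) • (I m : V)
    rw [lie_LI]
    have : m - 1 ≠ -1 := by omega
    rw [if_neg this]
    have : (1 : ℤ) + (m - 1) = m := by omega
    rw [this]
    push_cast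
    simp
  have hps : ψ ⁅x, y⁆ = 0 := by
    rw [LieHom.map_lie]
    show ψ x * ψ y - ψ y * ψ x = 0
    ring
  rw [hbr, map_smul] at hps
  have hne : (m : ℂ) - 1 ≠ 0 := by
    have : ((m : ℤ) : ℂ) ≠ 1 := by exact_mod_cast (by omega : m ≠ 1)
    exact sub_ne_zero_of_ne this
  rw [smul_eq_mul, mul_eq_zero] at hps
  exact hps.resolve_left hne

end ModuleSide

end THV

namespace THV

section BvLemmas

variable (V : Type) [LieRing V] [LieAlgebra ℂ V] [THV V] (ψ : nPlus V →ₗ⁅ℂ⁆ ℂ)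

example : SMulCommClass ℂ (UEA V) (Mpsi V ψ) := inferInstance

/-! ### commutator formulas in `U(𝒱)` -/

lemma h_LL (a N : ℕ) (hN : 1 ≤ N) :
    ιV V (L (-(a:ℤ))) * ιV V (L (-(N:ℤ))) = ιV V (L (-(N:ℤ))) * ιV V (L (-(a:ℤ)))
      + ((a:ℂ) - (N:ℂ)) • ιV V (L (-((a+N:ℕ):ℤ))) := by
  rw [iota_mul, lie_LL]
  rw [if_neg (by omega : ¬ -(N:ℤ) = -(-(a:ℤ)))]
  rw [zero_smul, add_zero]
  have h1 : (-(a:ℤ) + -(N:ℤ)) = -((a+N:ℕ):ℤ) := by push_cast; ring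
  have h2 : ((-(N:ℤ) : ℤ) : ℂ) - ((-(a:ℤ) : ℤ) : ℂ) = -((N:ℂ) - (a:ℂ)) := by push_cast; ring
  rw [h1, map_smul]
  congr 1
  push_cast
  ring_nf

lemma h_IL (a N : ℕ) (ha : 1 ≤ a) :
    ιV V (I (-(a:ℤ))) * ιV V (L (-(N:ℤ))) = ιV V (L (-(N:ℤ))) * ιV V (I (-(a:ℤ)))
      + (a:ℂ) • ιV V (I (-((a+N:ℕ):ℤ))) := by
  rw [iota_mul]
  have hsk : ⁅(I (-(a:ℤ)) : V), (L (-(N:ℤ)) : V)⁆ = -⁅(L (-(N:ℤ)) : V), (I (-(a:ℤ)) : V)⁆ :=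
    (lie_skew _ _).symm
  rw [hsk, lie_LI, if_neg (by omega : ¬ -(a:ℤ) = -(-(N:ℤ)))]
  rw [zero_smul, add_zero]
  have h1 : (-(N:ℤ) + -(a:ℤ)) = -((a+N:ℕ):ℤ) := by push_cast; ring
  rw [h1, map_neg, map_smul, ← neg_smul]
  congr 1
  push_cast
  ring

lemma h_II (a N : ℕ) (ha : 1 ≤ a) :
    ιV V (I (-(a:ℤ))) * ιV V (I (-(N:ℤ))) = ιV V (I (-(N:ℤ))) * ιV V (I (-(a:ℤ))) := by
  rw [iota_mul, lie_II, if_neg (by omega : ¬ -(N:ℤ) = -(-(a:ℤ))), zero_smul,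
    map_zero, add_zero]

lemma h_ImL (m : ℤ) (N : ℕ) (hm : 1 ≤ m) :
    ιV V (I m) * ιV V (L (-(N:ℤ))) = ιV V (L (-(N:ℤ))) * ιV V (I m)
      - (m:ℂ) • ιV V (I (m - N)) - (if m = (N:ℤ) then ((N:ℂ)^2 + N) else 0) • ιV V (z 1) := by
  rw [iota_mul]
  have hsk : ⁅(I m : V), (L (-(N:ℤ)) : V)⁆ = -⁅(L (-(N:ℤ)) : V), (I m : V)⁆ :=
    (lie_skew _ _).symm
  rw [hsk, lie_LI]
  have h1 : -(N:ℤ) + m = m - N := by ring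
  rw [h1, map_neg, map_add, map_smul, map_smul]
  have hif : (if m = - -(N:ℤ) then (((-(N:ℤ)) : ℤ) : ℂ) ^ 2 - (((-(N:ℤ)) : ℤ) : ℂ) else 0)
      = (if m = (N:ℤ) then ((N:ℂ)^2 + N) else 0) := by
    by_cases h : m = (N:ℤ)
    · rw [if_pos (by omega), if_pos h]; push_cast; ring
    · rw [if_neg (by omega), if_neg h]
  rw [hif]
  abel

lemma h_ImI (m : ℤ) (N : ℕ) :
    ιV V (I m) * ιV V (I (-(N:ℤ))) = ιV V (I (-(N:ℤ))) * ιV V (I m)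
      + (if (N:ℤ) = m then (m:ℂ) else 0) • ιV V (z 2) := by
  rcases eq_or_ne ((N:ℤ)) m with h | h
  · rw [iota_mul, lie_II, if_pos (by omega : -(N:ℤ) = -m), if_pos h, map_smul]
  · rw [iota_mul, lie_II, if_neg (by omega : ¬ -(N:ℤ) = -m), if_neg h]
    simp

end BvLemmas

end THV

namespace THV

section BvManip

variable (V : Type) [LieRing V] [LieAlgebra ℂ V] [THV V] (ψ : nPlus V →ₗ⁅ℂ⁆ ℂ)

lemma Bv_insert_L (t : Fin 4 → ℕ) {lam : ℕ →₀ ℕ} (mu : ℕ →₀ ℕ) {a : ℕ}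
    (ha : lam.support.sup id ≤ a) :
    ιV V (L (-(a:ℤ))) • Bv V ψ t lam mu = Bv V ψ t (lam + Finsupp.single a 1) mu := by
  rw [Bv, Bv, smul_smul]
  congr 1
  have hc := (commute_iotaL_zword V (-(a:ℤ)) t).eq
  have hw : Lword V (lam + Finsupp.single a 1) = ιV V (L (-(a:ℤ))) * Lword V lam := by
    rw [Lword_eq_word, Lword_eq_word, word_insert V _ ha]
  rw [hw, ← mul_assoc, ← mul_assoc, hc]
  simp only [mul_assoc]

lemma Bv_peel_L (t : Fin 4 → ℕ) {lam : ℕ →₀ ℕ} (mu : ℕ →₀ ℕ) (hlam : lam ≠ 0) :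
    Bv V ψ t lam mu = ιV V (L (-((lam.support.sup id : ℕ) : ℤ))) •
      Bv V ψ t (lam - Finsupp.single (lam.support.sup id) 1) mu := by
  rw [Bv_insert_L V ψ t mu (sup_sub_single_le lam _ le_rfl),
    sub_add_single_cancel (sup_mem_support hlam)]

lemma Bv_insert_I (t : Fin 4 → ℕ) {mu : ℕ →₀ ℕ} {a : ℕ}
    (ha : mu.support.sup id ≤ a) :
    ιV V (I (-(a:ℤ))) • Bv V ψ t 0 mu = Bv V ψ t 0 (mu + Finsupp.single a 1) := by
  rw [Bv, Bv, smul_smul]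
  congr 1
  have hc := (commute_iotaI_zword V (-(a:ℤ)) t).eq
  have hw : Iword V (mu + Finsupp.single a 1) = ιV V (I (-(a:ℤ))) * Iword V mu := by
    rw [Iword_eq_word, Iword_eq_word, word_insert V _ ha]
  rw [Lword_zero, hw, mul_one, ← mul_assoc, hc]
  simp only [mul_assoc, mul_one]

lemma Bv_peel_I (t : Fin 4 → ℕ) {mu : ℕ →₀ ℕ} (hmu : mu ≠ 0) :
    Bv V ψ t 0 mu = ιV V (I (-((mu.support.sup id : ℕ) : ℤ))) •
      Bv V ψ t 0 (mu - Finsupp.single (mu.support.sup id) 1) := by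
  rw [Bv_insert_I V ψ t (sup_sub_single_le mu _ le_rfl),
    sub_add_single_cancel (sup_mem_support hmu)]

lemma Bv_zElt (i : Fin 4) (t : Fin 4 → ℕ) (lam mu : ℕ →₀ ℕ) :
    ∃ t' : Fin 4 → ℕ, zElt V i • Bv V ψ t lam mu = Bv V ψ t' lam mu := by
  obtain ⟨t', ht⟩ := zElt_mul_zword V i t
  refine ⟨t', ?_⟩
  rw [Bv, Bv, smul_smul, ← mul_assoc, ← mul_assoc, ht]

lemma Bv_Im_base (m : ℤ) (hm : 1 ≤ m) (t : Fin 4 → ℕ) :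
    ιV V (I m) • Bv V ψ t 0 0 = ψ ⟨I m, I_mem_nPlus V hm⟩ • Bv V ψ t 0 0 := by
  have hb := iota_smul_mw V ψ ⟨I m, I_mem_nPlus V hm⟩
  rw [show ((⟨I m, I_mem_nPlus V hm⟩ : nPlus V) : V) = I m from rfl] at hb
  rw [Bv, Lword_zero, Iword_zero, mul_one, mul_one, smul_smul,
    (commute_iotaI_zword V m t).eq, ← smul_smul, hb, smul_comm]

variable (B : Module.Basis (WIdx) ℂ (Mpsi V ψ))

lemma span_step (hB : IsStdBasis V ψ B) (F : UEA V) (c k : ℤ)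
    (hF : ∀ (t : Fin 4 → ℕ) (lam mu : ℕ →₀ ℕ), mu 0 = 0 →
      (pdeg lam : ℤ) + (pdeg mu : ℤ) ≤ k →
      F • Bv V ψ t lam mu ∈ Dk V ψ B ((pdeg lam : ℤ) + (pdeg mu : ℤ) + c))
    {v : Mpsi V ψ} (hv : v ∈ Dk V ψ B k) : F • v ∈ Dk V ψ B (k + c) := by
  induction hv using Submodule.span_induction with
  | mem x hx =>
      obtain ⟨p, hp, rfl⟩ := hx
      obtain ⟨t, lam, mu⟩ := p
      rw [hB t lam mu]
      have hdm : (pdeg lam : ℤ) + (pdeg mu.1 : ℤ) ≤ k := hp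
      exact Dk_mono V ψ B (by omega) (hF t lam mu.1 mu.2 hdm)
  | zero => rw [smul_zero]; exact Submodule.zero_mem _
  | add x y _ _ hx hy => rw [smul_add]; exact Submodule.add_mem _ hx hy
  | smul c' x _ hx => rw [smul_comm]; exact Submodule.smul_mem _ c' hx

end BvManip

end THV

namespace THV

section InsL

variable (V : Type) [LieRing V] [LieAlgebra ℂ V] [THV V] (ψ : nPlus V →ₗ⁅ℂ⁆ ℂ)
variable (B : Module.Basis (WIdx) ℂ (Mpsi V ψ))

lemma pdeg_zero : pdeg (0 : ℕ →₀ ℕ) = 0 := by simp [pdeg]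

lemma psize_zero : psize (0 : ℕ →₀ ℕ) = 0 := by simp [psize]

lemma pdeg_peel {lam : ℕ →₀ ℕ} (hlam : lam ≠ 0) :
    pdeg (lam - Finsupp.single (lam.support.sup id) 1) + lam.support.sup id = pdeg lam := by
  conv_rhs => rw [← sub_add_single_cancel (sup_mem_support hlam)]
  rw [pdeg_add, pdeg_single, mul_one]

lemma psize_peel {lam : ℕ →₀ ℕ} (hlam : lam ≠ 0) :
    psize (lam - Finsupp.single (lam.support.sup id) 1) + 1 = psize lam := by
  conv_rhs => rw [← sub_add_single_cancel (sup_mem_support hlam)]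
  rw [psize_add, psize_single]

lemma insL (hB : IsStdBasis V ψ B) :
    ∀ d : ℕ, ∀ (a : ℕ) (t : Fin 4 → ℕ) (lam mu : ℕ →₀ ℕ), mu 0 = 0 →
      pdeg lam + pdeg mu = d →
      ιV V (L (-(a:ℤ))) • Bv V ψ t lam mu ∈ Dk V ψ B ((d : ℤ) + (a : ℤ)) := by
  intro d
  induction d using Nat.strong_induction_on with
  | _ d ihd =>
  intro a t lam mu h0 hdeg
  by_cases hsup : lam.support.sup id ≤ a
  · rw [Bv_insert_L V ψ t mu hsup]
    apply Bv_mem_Dk V ψ B hB h0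
    rw [pdeg_add, pdeg_single]
    push_cast
    omega
  · push_neg at hsup
    have hlam : lam ≠ 0 := by
      intro h
      rw [h] at hsup
      simp at hsup
    set N := lam.support.sup id with hN
    have hN1 : 1 ≤ N := by omega
    set lam' := lam - Finsupp.single N 1 with hlam'
    have hdd : pdeg lam' + N = pdeg lam := pdeg_peel hlam
    set d' := pdeg lam' + pdeg mu with hd'
    have hd'd : d' + N = d := by omega
    rw [Bv_peel_L V ψ t mu hlam, smul_smul, h_LL V a N hN1, add_smul, smul_assoc]
    apply Submodule.add_mem
    · -- (ι(L(-N)) * ι(L(-a))) • Bv'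
      rw [← smul_smul]
      have h1 : ιV V (L (-(a:ℤ))) • Bv V ψ t lam' mu ∈ Dk V ψ B ((d' : ℤ) + (a : ℤ)) :=
        ihd d' (by omega) a t lam' mu h0 rfl
      have h2 := span_step V ψ B hB (ιV V (L (-(N:ℤ)))) (N : ℤ) ((d' : ℤ) + (a : ℤ))
        (fun t2 lam2 mu2 h02 hle2 => by
          have hlt : pdeg lam2 + pdeg mu2 < d := by omega
          have := ihd (pdeg lam2 + pdeg mu2) hlt N t2 lam2 mu2 h02 rfl
          exact Dk_mono V ψ B (by push_cast; omega) this) h1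
      exact Dk_mono V ψ B (by push_cast; omega) h2
    · -- ((a-N) • ι(L(-(a+N)))) • Bv'
      apply Submodule.smul_mem
      have := ihd d' (by omega) (a + N) t lam' mu h0 rfl
      exact Dk_mono V ψ B (by push_cast; omega) this

lemma insL_span (hB : IsStdBasis V ψ B) (a : ℕ) (k : ℤ) {v : Mpsi V ψ}
    (hv : v ∈ Dk V ψ B k) : ιV V (L (-(a:ℤ))) • v ∈ Dk V ψ B (k + a) := by
  refine span_step V ψ B hB _ a k (fun t lam mu h0 hle => ?_) hv
  have := insL V ψ B hB (pdeg lam + pdeg mu) a t lam mu h0 rfl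
  exact Dk_mono V ψ B (by push_cast; omega) this

end InsL

end THV

namespace THV

section InsI

variable (V : Type) [LieRing V] [LieAlgebra ℂ V] [THV V] (ψ : nPlus V →ₗ⁅ℂ⁆ ℂ)
variable (B : Module.Basis (WIdx) ℂ (Mpsi V ψ))

lemma insI (hB : IsStdBasis V ψ B) :
    ∀ d s : ℕ, ∀ (a : ℕ), 1 ≤ a → ∀ (t : Fin 4 → ℕ) (lam mu : ℕ →₀ ℕ), mu 0 = 0 →
      pdeg lam + pdeg mu = d → psize lam = s →
      ιV V (I (-(a:ℤ))) • Bv V ψ t lam mu ∈ Dk V ψ B ((d : ℤ) + (a : ℤ)) := by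
  intro d
  induction d using Nat.strong_induction_on with
  | _ d ihd =>
  intro s
  induction s using Nat.strong_induction_on with
  | _ s ihs =>
  intro a ha t lam mu h0 hdeg hsize
  by_cases hlam : lam = 0
  · subst hlam
    by_cases hsup : mu.support.sup id ≤ a
    · rw [Bv_insert_I V ψ t hsup]
      apply Bv_mem_Dk V ψ B hB
      · rw [Finsupp.add_apply, Finsupp.single_apply, if_neg (by omega), h0]
        omega
      · rw [pdeg_add, pdeg_single]
        rw [pdeg_zero] at hdeg ⊢
        push_cast
        omega
    · push_neg at hsup
      have hmu : mu ≠ 0 := by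
        intro h
        rw [h] at hsup
        simp at hsup
      set N := mu.support.sup id with hN
      have hN1 : 1 ≤ N := by omega
      set mu' := mu - Finsupp.single N 1 with hmu'
      have h0' : mu' 0 = 0 := by
        rw [hmu', Finsupp.tsub_apply, h0]
        simp
      have hdd : pdeg mu' + N = pdeg mu := pdeg_peel hmu
      set d' := pdeg mu' with hd'
      have hd'd : d' + N = d := by
        rw [pdeg_zero] at hdeg
        omega
      rw [Bv_peel_I V ψ t hmu, smul_smul, h_II V a N ha, ← smul_smul]
      have h1 : ιV V (I (-(a:ℤ))) • Bv V ψ t 0 mu' ∈ Dk V ψ B ((d' : ℤ) + (a : ℤ)) :=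
        ihd d' (by omega) 0 a ha t 0 mu' h0' (by rw [pdeg_zero]; omega) psize_zero
      have h2 := span_step V ψ B hB (ιV V (I (-(N:ℤ)))) (N : ℤ) ((d' : ℤ) + (a : ℤ))
        (fun t2 lam2 mu2 h02 hle2 => by
          have hlt : pdeg lam2 + pdeg mu2 < d := by omega
          have := ihd (pdeg lam2 + pdeg mu2) hlt (psize lam2) N hN1 t2 lam2 mu2 h02 rfl rfl
          exact Dk_mono V ψ B (by push_cast; omega) this) h1
      exact Dk_mono V ψ B (by push_cast; omega) h2
  · -- lam ≠ 0 : peel the top L-letter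
    set N := lam.support.sup id with hN
    set lam' := lam - Finsupp.single N 1 with hlam'
    have hdd : pdeg lam' + N = pdeg lam := pdeg_peel hlam
    have hss : psize lam' + 1 = psize lam := psize_peel hlam
    set d' := pdeg lam' + pdeg mu with hd'
    have hd'd : d' + N = d := by omega
    rw [Bv_peel_L V ψ t mu hlam, smul_smul, h_IL V a N ha, add_smul, smul_assoc]
    apply Submodule.add_mem
    · rw [← smul_smul]
      have h1 : ιV V (I (-(a:ℤ))) • Bv V ψ t lam' mu ∈ Dk V ψ B ((d' : ℤ) + (a : ℤ)) := by
        rcases Nat.eq_zero_or_pos N with hN0 | hN1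
        · have := ihs (psize lam') (by omega) a ha t lam' mu h0 (by omega) rfl
          exact Dk_mono V ψ B (by push_cast; omega) this
        · exact ihd d' (by omega) (psize lam') a ha t lam' mu h0 rfl rfl
      have h2 := insL_span V ψ B hB N ((d' : ℤ) + (a : ℤ)) h1
      exact Dk_mono V ψ B (by push_cast; omega) h2
    · apply Submodule.smul_mem
      have h1 : ιV V (I (-((a + N : ℕ):ℤ))) • Bv V ψ t lam' mu
          ∈ Dk V ψ B ((d' : ℤ) + ((a + N : ℕ) : ℤ)) := by
        rcases Nat.eq_zero_or_pos N with hN0 | hN1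
        · have := ihs (psize lam') (by omega) (a + N) (by omega) t lam' mu h0 (by omega) rfl
          exact Dk_mono V ψ B (by push_cast; omega) this
        · exact ihd d' (by omega) (psize lam') (a + N) (by omega) t lam' mu h0 rfl rfl
      exact Dk_mono V ψ B (by push_cast; omega) h1

lemma insI_span (hB : IsStdBasis V ψ B) (a : ℕ) (ha : 1 ≤ a) (k : ℤ) {v : Mpsi V ψ}
    (hv : v ∈ Dk V ψ B k) : ιV V (I (-(a:ℤ))) • v ∈ Dk V ψ B (k + a) := by
  refine span_step V ψ B hB _ a k (fun t lam mu h0 hle => ?_) hv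
  have := insI V ψ B hB (pdeg lam + pdeg mu) (psize lam) a ha t lam mu h0 rfl rfl
  exact Dk_mono V ψ B (by push_cast; omega) this

end InsI

end THV

namespace THV

section BrI

variable (V : Type) [LieRing V] [LieAlgebra ℂ V] [THV V] (ψ : nPlus V →ₗ⁅ℂ⁆ ℂ)
variable (B : Module.Basis (WIdx) ℂ (Mpsi V ψ))

lemma brI (hB : IsStdBasis V ψ B) :
    ∀ d s : ℕ, ∀ (m : ℤ), 1 ≤ m → ∀ (t : Fin 4 → ℕ) (lam mu : ℕ →₀ ℕ), mu 0 = 0 →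
      pdeg lam + pdeg mu = d → psize lam = s →
      ιV V (I m) • Bv V ψ t lam mu ∈ Dk V ψ B ((d : ℤ) - m + 1) := by
  intro d
  induction d using Nat.strong_induction_on with
  | _ d ihd =>
  intro s
  induction s using Nat.strong_induction_on with
  | _ s ihs =>
  intro m hm t lam mu h0 hdeg hsize
  by_cases hlam : lam = 0
  · subst hlam
    by_cases hmu : mu = 0
    · subst hmu
      have hd0 : d = 0 := by rw [pdeg_zero] at hdeg; omega
      rcases (by omega : m = 1 ∨ 2 ≤ m) with rfl | hm2
      · rw [Bv_Im_base V ψ 1 le_rfl t]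
        apply Submodule.smul_mem
        apply Bv_mem_Dk V ψ B hB rfl
        rw [pdeg_zero]
        push_cast
        omega
      · rw [Bv_Im_base V ψ m hm t, psi_I_eq_zero V ψ hm2 _, zero_smul]
        exact Submodule.zero_mem _
    · -- peel the top I-letter
      set N := mu.support.sup id with hN
      have hN1 : 1 ≤ N := by
        rcases Nat.eq_zero_or_pos N with h' | h'
        · exfalso
          apply sup_mem_support hmu
          rw [← hN, h']
          exact h0
        · exact h'
      set mu' := mu - Finsupp.single N 1 with hmu'
      have h0' : mu' 0 = 0 := by
        rw [hmu', Finsupp.tsub_apply, h0]; simp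
      have hdd : pdeg mu' + N = pdeg mu := pdeg_peel hmu
      set d' := pdeg mu' with hd'
      have hd'd : d' + N = d := by rw [pdeg_zero] at hdeg; omega
      rw [Bv_peel_I V ψ t hmu, smul_smul, h_ImI V m N, add_smul]
      apply Submodule.add_mem
      · rw [← smul_smul]
        have h1 : ιV V (I m) • Bv V ψ t 0 mu' ∈ Dk V ψ B ((d' : ℤ) - m + 1) :=
          ihd d' (by omega) 0 m hm t 0 mu' h0' (by rw [pdeg_zero]; omega) psize_zero
        have h2 := insI_span V ψ B hB N hN1 _ h1
        exact Dk_mono V ψ B (by push_cast; omega) h2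
      · rw [smul_assoc]
        rcases eq_or_ne ((N:ℕ):ℤ) m with he | he
        · rw [if_pos he]
          apply Submodule.smul_mem
          have hz : ιV V (z 2) = zElt V 3 := rfl
          obtain ⟨t', ht'⟩ := Bv_zElt V ψ 3 t 0 mu'
          rw [hz, ht']
          apply Bv_mem_Dk V ψ B hB h0'
          rw [pdeg_zero]
          push_cast
          omega
        · rw [if_neg he, zero_smul]
          exact Submodule.zero_mem _
  · -- peel the top L-letter
    set N := lam.support.sup id with hN
    set lam' := lam - Finsupp.single N 1 with hlam'
    have hdd : pdeg lam' + N = pdeg lam := pdeg_peel hlam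
    have hss : psize lam' + 1 = psize lam := psize_peel hlam
    have hs1 : 1 ≤ psize lam := psize_pos hlam
    set d' := pdeg lam' + pdeg mu with hd'
    have hd'd : d' + N = d := by omega
    rw [Bv_peel_L V ψ t mu hlam, smul_smul, h_ImL V m N hm, sub_smul, sub_smul]
    refine Submodule.sub_mem _ (Submodule.sub_mem _ ?_ ?_) ?_
    · -- ι(L(-N)) * ι(I m) term
      rw [← smul_smul]
      have h1 : ιV V (I m) • Bv V ψ t lam' mu ∈ Dk V ψ B ((d' : ℤ) - m + 1) := by
        rcases Nat.eq_zero_or_pos N with hN0 | hN1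
        · have := ihs (psize lam') (by omega) m hm t lam' mu h0 (by omega) rfl
          exact Dk_mono V ψ B (by push_cast; omega) this
        · exact ihd d' (by omega) (psize lam') m hm t lam' mu h0 rfl rfl
      have h2 := insL_span V ψ B hB N _ h1
      exact Dk_mono V ψ B (by push_cast; omega) h2
    · -- (m:ℂ) • ι(I (m - N)) term
      rw [smul_assoc]
      apply Submodule.smul_mem
      rcases lt_trichotomy m (N : ℤ) with hmN | hmN | hmN
      · -- m < N : a genuine lowering letter I_{-(N-m)}
        set b : ℕ := ((N : ℤ) - m).toNat with hb
        have hbz : (b : ℤ) = (N : ℤ) - m := by omega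
        have hb1 : 1 ≤ b := by omega
        have hidx : m - (N : ℤ) = -(b : ℤ) := by omega
        rw [hidx]
        have := insI V ψ B hB (pdeg lam' + pdeg mu) (psize lam') b hb1 t lam' mu h0 rfl rfl
        exact Dk_mono V ψ B (by push_cast; omega) this
      · -- m = N : the letter is I_0 = z_0
        have hidx : ιV V (I (m - (N:ℤ))) = zElt V 0 := by
          rw [hmN, sub_self]; rfl
        obtain ⟨t', ht'⟩ := Bv_zElt V ψ 0 t lam' mu
        rw [hidx, ht']
        apply Bv_mem_Dk V ψ B hB h0
        push_cast
        omega
      · -- m > N : recurse with the smaller raising letter I_{m-N}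
        rcases Nat.eq_zero_or_pos N with hN0 | hN1
        · have := ihs (psize lam') (by omega) (m - N) (by omega) t lam' mu h0 (by omega) rfl
          exact Dk_mono V ψ B (by push_cast; omega) this
        · have := ihd d' (by omega) (psize lam') (m - N) (by omega) t lam' mu h0 rfl rfl
          exact Dk_mono V ψ B (by push_cast; omega) this
    · -- central z₁ term
      rw [smul_assoc]
      rcases eq_or_ne m ((N:ℕ):ℤ) with he | he
      · rw [if_pos he]
        apply Submodule.smul_mem
        have hz : ιV V (z 1) = zElt V 2 := rfl
        obtain ⟨t', ht'⟩ := Bv_zElt V ψ 2 t lam' mu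
        rw [hz, ht']
        apply Bv_mem_Dk V ψ B hB h0
        push_cast
        omega
      · rw [if_neg he, zero_smul]
        exact Submodule.zero_mem _

end BrI

end THV

open THV in
/-- `maxdeg([I_m, L_{−λ}I_{−μ}]w) ≤ |λ| + |μ| − m + 1`. -/
theorem maxdeg_bracket_I_le
    (V : Type) [LieRing V] [LieAlgebra ℂ V] [THV V]
    (ψ : nPlus V →ₗ⁅ℂ⁆ ℂ)
    (hL1 : ψ ⟨THV.L 1, L_mem_nPlus V le_rfl⟩ ≠ 0)
    (hL2 : ψ ⟨THV.L 2, L_mem_nPlus V one_le_two⟩ ≠ 0)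
    (hI1 : ψ ⟨THV.I 1, I_mem_nPlus V le_rfl⟩ ≠ 0)
    (B : Module.Basis WIdx ℂ (Mpsi V ψ)) (hB : IsStdBasis V ψ B)
    (m : ℤ) (hm : 1 ≤ m) (lam : ℕ →₀ ℕ) (mu : ℕ →₀ ℕ) (hmu : mu 0 = 0) :
    maxdeg V ψ B (⁅ιV V (THV.I m), Lword V lam * Iword V mu⁆ • mw V ψ)
      ≤ (((pdeg lam : ℤ) + (pdeg mu : ℤ) - m + 1 : ℤ) : WithBot ℤ) := by
  have hIm : (I m : V) ∈ nPlus V := I_mem_nPlus V hm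
  have huw : (Lword V lam * Iword V mu) • mw V ψ = Bv V ψ (fun _ => 0) lam mu := by
    rw [Bv, zword_zero, one_mul]
  apply mem_Dk_maxdeg V ψ B
  rw [Ring.lie_def, sub_smul, mul_smul (ιV V (THV.I m)) (Lword V lam * Iword V mu) (mw V ψ),
    mul_smul (Lword V lam * Iword V mu) (ιV V (THV.I m)) (mw V ψ), huw]
  apply Submodule.sub_mem
  · have := brI V ψ B hB (pdeg lam + pdeg mu) (psize lam) m hm (fun _ => 0) lam mu hmu rfl rfl
    exact Dk_mono V ψ B (by push_cast; omega) this
  · have hw := iota_smul_mw V ψ ⟨I m, hIm⟩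
    rw [show ((⟨I m, hIm⟩ : nPlus V) : V) = I m from rfl] at hw
    rw [hw, smul_comm, huw]
    rcases (by omega : m = 1 ∨ 2 ≤ m) with rfl | hm2
    · apply Submodule.smul_mem
      apply Bv_mem_Dk V ψ B hB hmu
      push_cast
      omega
    · rw [psi_I_eq_zero V ψ hm2 hIm, zero_smul]
      exact Submodule.zero_mem _
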